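/- For every point x ∈ Ξ that does not belong to 𝕏₀^ε (i.e., μ(G_l(x)) < 1 − ε for some index l ∈ {1,…,2N}), the probability of the event {ω ∈ Ω : x ∈ 𝕏₀^{α,M}(ω)} is at most exp(−2M(ε−α)²). -/

import Mathlib

open MeasureTheory ProbabilityTheory

/-- Hoeffding's lemma for Bernoulli: `(1-p) + p e^t ≤ exp (p t + t²/8)` for `p ∈ [0,1]`, `t ≥ 0`. -/
lemma bernoulli_mgf_le {p : ℝ} (hp0 : 0 ≤ p) (hp1 : p ≤ 1) {t : ℝ} (ht : 0 ≤ t) :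
    (1 - p) + p * Real.exp t ≤ Real.exp (p * t + t ^ 2 / 8) := by
  set D : ℝ → ℝ := fun s => (1 - p) + p * Real.exp s with hDdef
  have hD : ∀ s, 0 < D s := by
    intro s
    rcases hp0.eq_or_lt with h | h
    · simp [hDdef, ← h]
    · have : 0 < p * Real.exp s := mul_pos h (Real.exp_pos s)
      have : 0 ≤ 1 - p := by linarith
      simp only [hDdef]; positivity
  set f : ℝ → ℝ := fun s => p * s + s ^ 2 / 8 - Real.log (D s) with hfdef
  set f' : ℝ → ℝ := fun s => p + s / 4 - p * Real.exp s / D s with hf'def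
  set f'' : ℝ → ℝ := fun s => 1 / 4 - p * Real.exp s * (1 - p) / (D s) ^ 2 with hf''def
  have hDd : ∀ s, HasDerivAt D (p * Real.exp s) s := fun s =>
    ((Real.hasDerivAt_exp s).const_mul p).const_add (1 - p)
  have hd1 : ∀ s, HasDerivAt f (f' s) s := by
    intro s
    have h1 : HasDerivAt (fun s : ℝ => p * s) p s := by
      simpa using (hasDerivAt_id s).const_mul p
    have h2 : HasDerivAt (fun s : ℝ => s ^ 2 / 8) (s / 4) s := by
      have := (hasDerivAt_pow 2 s).div_const 8
      convert this using 1
      · rfl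
      · rfl
      · push_cast; ring
    have h3 : HasDerivAt (fun s => Real.log (D s)) (p * Real.exp s / D s) s :=
      (hDd s).log (hD s).ne'
    exact (h1.add h2).sub h3
  have hd2 : ∀ s, HasDerivAt f' (f'' s) s := by
    intro s
    have h1 : HasDerivAt (fun s : ℝ => p + s / 4) (1 / 4) s := by
      simpa using ((hasDerivAt_id s).div_const 4).const_add p
    have h2 : HasDerivAt (fun s => p * Real.exp s / D s)
        ((p * Real.exp s * D s - p * Real.exp s * (p * Real.exp s)) / (D s) ^ 2) s :=
      ((Real.hasDerivAt_exp s).const_mul p).div (hDd s) (hD s).ne'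
    have h2' : HasDerivAt (fun s => p * Real.exp s / D s)
        (p * Real.exp s * (1 - p) / (D s) ^ 2) s := by
      convert h2 using 1
      simp only [hDdef]; ring
    exact h1.sub h2'
  have hf''nonneg : ∀ s, 0 ≤ f'' s := by
    intro s
    have hDs := hD s
    rw [hf''def, sub_nonneg, div_le_iff₀ (by positivity)]
    have h4 : 4 * ((1 - p) * (p * Real.exp s)) ≤ ((1 - p) + p * Real.exp s) ^ 2 := by
      nlinarith [sq_nonneg ((1 - p) - p * Real.exp s)]
    simp only [hDdef] at *
    nlinarith
  have hmono' : Monotone f' :=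
    monotone_of_deriv_nonneg (fun s => (hd2 s).differentiableAt)
      (fun s => by rw [(hd2 s).deriv]; exact hf''nonneg s)
  have hf'0 : f' 0 = 0 := by simp [hf'def, hDdef]
  have hf'nonneg : ∀ s ∈ interior (Set.Ici (0 : ℝ)), 0 ≤ deriv f s := by
    intro s hs
    rw [(hd1 s).deriv]
    rw [interior_Ici] at hs
    calc (0 : ℝ) = f' 0 := hf'0.symm
    _ ≤ f' s := hmono' (le_of_lt hs)
  have hmono : MonotoneOn f (Set.Ici 0) :=
    monotoneOn_of_deriv_nonneg (convex_Ici 0)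
      (fun s _ => (hd1 s).differentiableAt.continuousAt.continuousWithinAt)
      (fun s _ => (hd1 s).differentiableAt.differentiableWithinAt) hf'nonneg
  have hf0 : f 0 = 0 := by simp [hfdef, hDdef]
  have hft : 0 ≤ f t := by
    calc (0 : ℝ) = f 0 := hf0.symm
    _ ≤ f t := hmono Set.self_mem_Ici ht ht
  have hlog : Real.log (D t) ≤ p * t + t ^ 2 / 8 := by
    simp only [hfdef] at hft; linarith
  calc D t = Real.exp (Real.log (D t)) := (Real.exp_log (hD t)).symm
  _ ≤ Real.exp (p * t + t ^ 2 / 8) := Real.exp_le_exp.2 hlog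

/-- For every `x ∈ Ξ` not in the feasible set `𝕏₀^ε` (i.e. `μ(G_l(x)) < 1 − ε`
for some `l`), the probability that `x` belongs to the sampled feasible set `𝕏₀^{α,M}(ω)`
is at most `exp(−2M(ε−α)²)`. -/
theorem prob_infeasible_in_sampled_set_le
    {Ω : Type*} [MeasurableSpace Ω] (P : Measure Ω) [IsProbabilityMeasure P]
    {E : Type*} [MeasurableSpace E] (μ : Measure E) [IsProbabilityMeasure μ]
    {M : ℕ} (hM : 1 ≤ M) (Λ : Fin M → Ω → E)
    (hΛmeas : ∀ j, Measurable (Λ j))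
    (hΛindep : iIndepFun Λ P)
    (hΛlaw : ∀ j, Measure.map (Λ j) P = μ)
    {X : Type*} (Ξ : Finset X) {L : ℕ} (hLcard : Ξ.card = L) (hL : 1 ≤ L)
    {N : ℕ} (hN : 1 ≤ N)
    (G : Fin (2 * N) → X → Set E) (hG : ∀ k x, MeasurableSet (G k x))
    {ε α : ℝ} (hε : ε ∈ Set.Ioo (0 : ℝ) 1) (hα : α ∈ Set.Ico (0 : ℝ) ε)
    (x : X) (hxΞ : x ∈ Ξ)
    (hxout : ∃ l : Fin (2 * N), (μ (G l x)).toReal < 1 - ε) :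
    (P {ω | x ∈ Ξ ∧ ∀ k : Fin (2 * N),
          1 - α ≤ (1 / M : ℝ) * ∑ j, (G k x).indicator (fun _ => (1 : ℝ)) (Λ j ω)}).toReal ≤
      Real.exp (-2 * M * (ε - α) ^ 2) := by
  obtain ⟨l, hl⟩ := hxout
  set S : Set E := G l x with hSdef
  have hS : MeasurableSet S := hG l x
  set p : ℝ := (μ S).toReal with hpdef
  have hp0 : 0 ≤ p := ENNReal.toReal_nonneg
  have hp1 : p ≤ 1 := by
    rw [hpdef]
    simpa using ENNReal.toReal_mono ENNReal.one_ne_top (prob_le_one (μ := μ) (s := S))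
  set g : E → ℝ := S.indicator (fun _ => (1 : ℝ)) with hgdef
  have hgmeas : Measurable g := measurable_const.indicator hS
  set Y : Fin M → Ω → ℝ := fun j ω => g (Λ j ω) with hYdef
  have hYmeas : ∀ j, Measurable (Y j) := fun j => hgmeas.comp (hΛmeas j)
  have hYindep : iIndepFun Y P :=
    hΛindep.comp (fun _ => g) (fun _ => hgmeas)
  set δ : ℝ := ε - α with hδdef
  have hδpos : 0 < δ := by rw [hδdef]; linarith [hα.2]
  set t : ℝ := 4 * δ with htdef
  have ht : 0 ≤ t := by positivity
  have hMpos : (0 : ℝ) < M := by exact_mod_cast hM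
  have hexp_eq : (fun e => Real.exp (t * g e)) =
      fun e => S.indicator (fun _ => Real.exp t - 1) e + 1 := by
    funext e
    by_cases he : e ∈ S
    · simp [hgdef, Set.indicator_of_mem he]
    · simp [hgdef, Set.indicator_of_notMem he]
  have hint_E : Integrable (fun e => Real.exp (t * g e)) μ := by
    rw [hexp_eq]
    exact ((integrable_const _).indicator hS).add (integrable_const 1)
  have hintY : ∀ j, Integrable (fun ω => Real.exp (t * Y j ω)) P := by
    intro j
    have h0 : Integrable (fun e => Real.exp (t * g e)) (Measure.map (Λ j) P) := by
      rw [hΛlaw j]; exact hint_E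
    exact (integrable_map_measure h0.aestronglyMeasurable (hΛmeas j).aemeasurable).mp h0
  have hint_gμ : ∫ e, Real.exp (t * g e) ∂μ = (1 - p) + p * Real.exp t := by
    rw [hexp_eq, integral_add ((integrable_const _).indicator hS) (integrable_const 1),
      integral_indicator_const _ hS, integral_const]
    simp [hpdef, smul_eq_mul]
    simp only [Measure.real]
    ring
  have hmgfY : ∀ j, mgf (Y j) P t = (1 - p) + p * Real.exp t := by
    intro j
    have h0 : Integrable (fun e => Real.exp (t * g e)) (Measure.map (Λ j) P) := by
      rw [hΛlaw j]; exact hint_E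
    rw [mgf]
    have : ∫ ω, Real.exp (t * Y j ω) ∂P
        = ∫ e, Real.exp (t * g e) ∂(Measure.map (Λ j) P) := by
      rw [integral_map (hΛmeas j).aemeasurable h0.aestronglyMeasurable]
    rw [this, hΛlaw j, hint_gμ]
  -- event inclusion
  have hsub : {ω | x ∈ Ξ ∧ ∀ k : Fin (2 * N),
        1 - α ≤ (1 / M : ℝ) * ∑ j, (G k x).indicator (fun _ => (1 : ℝ)) (Λ j ω)}
      ⊆ {ω | (M : ℝ) * (1 - α) ≤ (∑ j, Y j) ω} := by
    intro ω hω
    have hk := hω.2 l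
    simp only [Set.mem_setOf_eq, Finset.sum_apply]
    calc (M : ℝ) * (1 - α) ≤ (M : ℝ) * ((1 / M : ℝ) *
          ∑ j, (G l x).indicator (fun _ => (1 : ℝ)) (Λ j ω)) :=
        mul_le_mul_of_nonneg_left hk hMpos.le
    _ = ∑ j, Y j ω := by
        rw [← mul_assoc, mul_one_div, div_self hMpos.ne', one_mul]
  have hint_sum : Integrable (fun ω => Real.exp (t * (∑ j, Y j) ω)) P :=
    hYindep.integrable_exp_mul_sum hYmeas (fun j _ => hintY j)
  have hchern := measure_ge_le_exp_mul_mgf (μ := P) (X := ∑ j, Y j)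
    ((M : ℝ) * (1 - α)) ht hint_sum
  have hmgf_sum : mgf (∑ j, Y j) P t = ((1 - p) + p * Real.exp t) ^ M := by
    rw [hYindep.mgf_sum hYmeas Finset.univ]
    simp [hmgfY, Finset.prod_const]
  have hbase_nonneg : 0 ≤ (1 - p) + p * Real.exp t := by
    have : 0 ≤ p * Real.exp t := by positivity
    linarith
  calc (P {ω | x ∈ Ξ ∧ ∀ k : Fin (2 * N),
          1 - α ≤ (1 / M : ℝ) * ∑ j, (G k x).indicator (fun _ => (1 : ℝ)) (Λ j ω)}).toReal
      ≤ (P {ω | (M : ℝ) * (1 - α) ≤ (∑ j, Y j) ω}).toReal :=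
        ENNReal.toReal_mono (measure_ne_top _ _) (measure_mono hsub)
    _ ≤ Real.exp (-t * ((M : ℝ) * (1 - α))) * mgf (∑ j, Y j) P t := hchern
    _ ≤ Real.exp (-t * ((M : ℝ) * (1 - α))) * (Real.exp (p * t + t ^ 2 / 8)) ^ M := by
        rw [hmgf_sum]
        exact mul_le_mul_of_nonneg_left
          (pow_le_pow_left₀ hbase_nonneg (bernoulli_mgf_le hp0 hp1 ht) M)
          (Real.exp_pos _).le
    _ = Real.exp (-t * ((M : ℝ) * (1 - α)) + (M : ℝ) * (p * t + t ^ 2 / 8)) := by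
        rw [← Real.exp_nat_mul, ← Real.exp_add]
    _ ≤ Real.exp (-2 * M * (ε - α) ^ 2) := by
        apply Real.exp_le_exp.2
        have hpε : p ≤ 1 - ε := hl.le
        have h1 : (M : ℝ) * (p * t) ≤ (M : ℝ) * ((1 - ε) * t) := by
          apply mul_le_mul_of_nonneg_left _ hMpos.le
          exact mul_le_mul_of_nonneg_right hpε ht
        have h2 : -t * ((M : ℝ) * (1 - α)) + (M : ℝ) * (p * t + t ^ 2 / 8)
            = (M : ℝ) * (4 * δ * (p - (1 - ε))) + -2 * (M : ℝ) * (ε - α) ^ 2 := by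
          rw [htdef, hδdef]; ring
        rw [h2]
        have h3 : (M : ℝ) * (4 * δ * (p - (1 - ε))) ≤ 0 :=
          mul_nonpos_of_nonneg_of_nonpos hMpos.le
            (mul_nonpos_of_nonneg_of_nonpos (by positivity) (by linarith))
        linarith
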